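/- Upper calibration under correct specification: if in addition p_σ(t) = ψ(t²/σ²) is strongly mean-calibrated, then the autocorrelation V(s) = ∫p_σ(t-s)p_σ(t)dt has V' Lipschitz with constant 2p_σ(0)L₁/σ and V'(0) = 0, and consequently V(0) - V(s) ≤ (2p_σ(0)L₁/σ)·s² for all s, which yields 𝒢_σ(f*) - 𝒢_σ(f) ≤ (2c_σ p_σ(0)L₁/σ)·‖f - f*‖²_{2,ρ}. -/

import Mathlib

open MeasureTheory

/-- Upper calibration under correct specification: with a strongly
mean-calibrated gain `p(t) = ψ(t²/σ²)` serving (up to norming `c`) as the noise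
density, the autocorrelation `V(s) = ∫ p(t-s)p(t)dt` has `V'` Lipschitz with
constant `2p(0)L₁/σ` and `V'(0) = 0`, hence `V(0) - V(s) ≤ (2p(0)L₁/σ)s²`, and
consequently `𝒢_σ(f*) - 𝒢_σ(f) ≤ (2c p(0) L₁/σ)‖f-f*‖²_{2,ρ}`. -/
theorem stmt17 {Ω 𝒳 : Type*} [MeasurableSpace Ω] [MeasurableSpace 𝒳]
    (μ : Measure Ω) [IsProbabilityMeasure μ]
    (X : Ω → 𝒳) (Y : Ω → ℝ) (hX : Measurable X) (hY : Measurable Y)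
    (fstar : 𝒳 → ℝ) (hfstar : Measurable fstar) (Mstar : ℝ)
    (hfstarB : ∀ x, |fstar x| ≤ Mstar)
    (ψ : ℝ → ℝ) (σ : ℝ) (hσ : 0 < σ) (p : ℝ → ℝ)
    (hpψ : ∀ t, p t = ψ (t ^ 2 / σ ^ 2))
    (c : ℝ) (hc : 0 < c)
    (hp_nonneg : ∀ t, 0 ≤ p t)
    (hψ_anti : ∀ u v : ℝ, 0 ≤ u → u ≤ v → ψ v ≤ ψ u)
    (L₁ : ℝ) (hψL₁ : ∀ u v : ℝ, |ψ (u ^ 2) - ψ (v ^ 2)| ≤ L₁ * |u - v|)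
    (hp_int : Integrable p) (hp_sq : MemLp p 2 volume)
    (hp_norm : ∫ t, c * p t = 1)
    (hdens : ∀ φ : 𝒳 → ℝ → ℝ, Measurable (Function.uncurry φ) →
      (∃ C, ∀ x y, |φ x y| ≤ C) →
      ∫ ω, φ (X ω) (Y ω) ∂μ =
        ∫ x, (∫ y, φ x y * (c * p (y - fstar x))) ∂(μ.map X))
    (V : ℝ → ℝ) (hV : ∀ s, V s = ∫ t, p (t - s) * p t) :
    (∀ s t : ℝ, |deriv V s - deriv V t| ≤ 2 * p 0 * L₁ / σ * |s - t|) ∧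
      deriv V 0 = 0 ∧
        (∀ s : ℝ, V 0 - V s ≤ 2 * p 0 * L₁ / σ * s ^ 2) ∧
          ∀ f : 𝒳 → ℝ, Measurable f → (∃ C, ∀ x, |f x| ≤ C) →
            (∫ ω, p (Y ω - fstar (X ω)) ∂μ) - (∫ ω, p (Y ω - f (X ω)) ∂μ) ≤
              2 * c * p 0 * L₁ / σ *
                ∫ ω, (f (X ω) - fstar (X ω)) ^ 2 ∂μ := by
  classical
  have hσ' : (σ : ℝ) ≠ 0 := ne_of_gt hσ
  have hL₁ : 0 ≤ L₁ := by
    have h := hψL₁ 1 0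
    have h2 : |(1:ℝ) - 0| = 1 := by norm_num
    rw [h2, mul_one] at h
    exact le_trans (abs_nonneg _) h
  have hLnn : 0 ≤ L₁ / σ := div_nonneg hL₁ hσ.le
  have hplip : ∀ a b : ℝ, |p a - p b| ≤ L₁ / σ * |a - b| := by
    intro a b
    rw [hpψ a, hpψ b, show a ^ 2 / σ ^ 2 = (a / σ) ^ 2 by rw [div_pow],
      show b ^ 2 / σ ^ 2 = (b / σ) ^ 2 by rw [div_pow]]
    have h := hψL₁ (a / σ) (b / σ)
    have h3 : |a / σ - b / σ| = |a - b| / σ := by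
      rw [div_sub_div_same, abs_div, abs_of_pos hσ]
    rw [h3] at h
    calc |ψ ((a / σ) ^ 2) - ψ ((b / σ) ^ 2)| ≤ L₁ * (|a - b| / σ) := h
      _ = L₁ / σ * |a - b| := by ring
  have hpmono : ∀ a b : ℝ, a ^ 2 ≤ b ^ 2 → p b ≤ p a := by
    intro a b hab
    rw [hpψ a, hpψ b]
    refine hψ_anti _ _ (by positivity) ?_
    gcongr
  have hp0 : ∀ t, p t ≤ p 0 := fun t => hpmono 0 t (by simpa using sq_nonneg t)
  have hp00 : 0 ≤ p 0 := hp_nonneg 0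
  have hLip : LipschitzWith (Real.toNNReal (L₁ / σ)) p :=
    LipschitzWith.of_dist_le_mul fun a b => by
      rw [Real.dist_eq, Real.dist_eq, Real.coe_toNNReal _ hLnn]; exact hplip a b
  have hp_cont : Continuous p := hLip.continuous
  have hb1 : ∀ x : ℝ, |p x| ≤ 2 * p 0 := fun x => by
    rw [abs_of_nonneg (hp_nonneg x)]; linarith [hp0 x]
  have hb2 : ∀ a b : ℝ, |p a - p b| ≤ 2 * p 0 := fun a b => by
    calc |p a - p b| ≤ |p a| + |p b| := abs_sub _ _
      _ ≤ 2 * p 0 := by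
          rw [abs_of_nonneg (hp_nonneg a), abs_of_nonneg (hp_nonneg b)]
          linarith [hp0 a, hp0 b]
  have hcomp : ∀ a : ℝ, Integrable (fun t => p (t + a)) := fun a =>
    hp_int.comp_add_right a
  have hcomps : ∀ a : ℝ, Integrable (fun t => p (t - a)) := fun a =>
    hp_int.comp_sub_right a
  have hImul : ∀ g : ℝ → ℝ, Continuous g → (∀ t, |g t| ≤ 2 * p 0) → ∀ b : ℝ,
      Integrable fun t => g t * p (t + b) := by
    intro g hg hgb b
    refine Integrable.mono' ((hcomp b).const_mul (2 * p 0))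
      ((hg.mul (hp_cont.comp (continuous_id.add continuous_const))).aestronglyMeasurable) ?_
    refine Filter.Eventually.of_forall fun t => ?_
    rw [Real.norm_eq_abs, abs_mul]
    calc |g t| * |p (t + b)| ≤ 2 * p 0 * |p (t + b)| :=
          mul_le_mul_of_nonneg_right (hgb t) (abs_nonneg _)
      _ = 2 * p 0 * p (t + b) := by rw [abs_of_nonneg (hp_nonneg _)]
  have hImul0 : ∀ g : ℝ → ℝ, Continuous g → (∀ t, |g t| ≤ 2 * p 0) →
      Integrable fun t => g t * p t := by
    intro g hg hgb
    simpa using hImul g hg hgb 0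
  have hVint : ∀ y : ℝ, Integrable fun t => p (t - y) * p t := fun y =>
    hImul0 _ (hp_cont.comp (continuous_id.sub continuous_const)) fun t => hb1 _
  -- L¹ modulus of continuity of p under translation
  have hshift : ∀ h : ℝ, 0 ≤ h → (∫ u, |p (u + h) - p u|) ≤ 2 * h * p 0 := by
    intro h hh
    set a : ℝ := -(h / 2) with ha
    have hint1 : Integrable fun u => p (u + h) - p u := (hcomp h).sub hp_int
    have hsplit : (∫ u, |p (u + h) - p u|) =
        (∫ u in Set.Iic a, |p (u + h) - p u|) + ∫ u in Set.Ioi a, |p (u + h) - p u| :=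
      (intervalIntegral.integral_Iic_add_Ioi hint1.abs.integrableOn hint1.abs.integrableOn).symm
    have htrans : ∀ b : ℝ, (∫ u in Set.Iic b, p (u + h)) = ∫ u in Set.Iic (b + h), p u := by
      intro b
      rw [← integral_indicator measurableSet_Iic, ← integral_indicator measurableSet_Iic,
        ← integral_add_right_eq_self ((Set.Iic (b + h)).indicator p) h]
      congr 1
      funext u
      simp only [Set.indicator_apply, Set.mem_Iic, add_le_add_iff_right]
    have key1 : (∫ u in Set.Iic a, |p (u + h) - p u|) =
        (∫ u in Set.Iic (a + h), p u) - ∫ u in Set.Iic a, p u := by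
      rw [setIntegral_congr_fun measurableSet_Iic
        (g := fun u => p (u + h) - p u) ?_]
      · rw [integral_sub ((hcomp h).integrableOn) hp_int.integrableOn, htrans a]
      · intro u hu
        simp only [Set.mem_Iic] at hu
        have hu' : u ≤ -(h / 2) := by rw [← ha]; exact hu
        have h2 : (u + h) ^ 2 ≤ u ^ 2 := by nlinarith [mul_nonneg hh hh]
        have h3 := hpmono (u + h) u h2
        simp only
        rw [abs_of_nonneg (by linarith)]
    have key2 : (∫ u in Set.Ioi a, |p (u + h) - p u|) =
        (∫ u in Set.Iic (a + h), p u) - ∫ u in Set.Iic a, p u := by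
      have heq : Set.EqOn (fun u => |p (u + h) - p u|) (fun u => p u - p (u + h))
          (Set.Ioi a) := by
        intro u hu
        simp only [Set.mem_Ioi] at hu
        have hu' : -(h / 2) ≤ u := by rw [← ha]; exact hu.le
        have h2 : u ^ 2 ≤ (u + h) ^ 2 := by nlinarith [mul_nonneg hh hh]
        have h3 := hpmono u (u + h) h2
        simp only
        rw [abs_of_nonpos (by linarith)]; ring
      rw [setIntegral_congr_fun measurableSet_Ioi heq,
        integral_sub hp_int.integrableOn ((hcomp h).integrableOn)]
      have t1 : (∫ u in Set.Iic a, p u) + (∫ u in Set.Ioi a, p u) = ∫ u, p u :=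
        intervalIntegral.integral_Iic_add_Ioi hp_int.integrableOn hp_int.integrableOn
      have t2 : (∫ u in Set.Iic a, p (u + h)) + (∫ u in Set.Ioi a, p (u + h))
          = ∫ u, p (u + h) :=
        intervalIntegral.integral_Iic_add_Ioi (hcomp h).integrableOn (hcomp h).integrableOn
      have t3 : (∫ u, p (u + h)) = ∫ u, p u := integral_add_right_eq_self p h
      rw [htrans a, t3] at t2
      linarith
    have key3 : (∫ u in Set.Iic (a + h), p u) - (∫ u in Set.Iic a, p u) ≤ h * p 0 := by
      rw [intervalIntegral.integral_Iic_sub_Iic hp_int.integrableOn hp_int.integrableOn]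
      calc (∫ u in a..(a + h), p u) ≤ ∫ _u in a..(a + h), p 0 :=
            intervalIntegral.integral_mono_on (by linarith)
              (hp_cont.intervalIntegrable _ _) intervalIntegrable_const
              fun x _ => hp0 x
        _ = h * p 0 := by
            rw [intervalIntegral.integral_const, smul_eq_mul, add_sub_cancel_left]
    rw [hsplit, key1, key2]
    linarith
  have hshift' : ∀ h : ℝ, (∫ u, |p (u + h) - p u|) ≤ 2 * |h| * p 0 := by
    intro h
    rcases le_or_gt 0 h with hh | hh
    · rw [abs_of_nonneg hh]; exact hshift h hh
    · have h1 : (∫ u, |p (u + h) - p u|) = ∫ u, |p (u + -h) - p u| := by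
        rw [← integral_add_right_eq_self (fun u => |p (u + h) - p u|) (-h)]
        congr 1
        funext u
        rw [show u + -h + h = u by ring, abs_sub_comm]
      rw [h1, abs_of_neg hh]
      exact hshift (-h) (by linarith)
  -- differentiability of V everywhere
  have hRad : ∀ᵐ x : ℝ, DifferentiableAt ℝ p x := hLip.ae_differentiableAt
  have hVd : ∀ s : ℝ, HasDerivAt V (∫ t, -deriv p (t - s) * p t) s := by
    intro s
    rw [hasDerivAt_iff_tendsto_slope]
    have hradt : ∀ᵐ t : ℝ, DifferentiableAt ℝ p (t - s) := by
      have hmp : MeasurePreserving (fun t : ℝ => t - s) volume volume :=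
        measurePreserving_sub_right volume s
      exact ae_of_ae_map hmp.measurable.aemeasurable (by rw [hmp.map_eq]; exact hRad)
    have hDCT :
        Filter.Tendsto (fun y => ∫ t, (p (t - y) - p (t - s)) / (y - s) * p t)
          (nhdsWithin s {s}ᶜ) (nhds (∫ t, -deriv p (t - s) * p t)) := by
      refine tendsto_integral_filter_of_dominated_convergence
        (fun t => L₁ / σ * p t) ?_ ?_ (hp_int.const_mul _) ?_
      · refine Filter.Eventually.of_forall fun y => ?_
        exact ((((hp_cont.comp (continuous_id.sub continuous_const)).sub
          (hp_cont.comp (continuous_id.sub continuous_const))).div_const _).mul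
          hp_cont).aestronglyMeasurable
      · filter_upwards [self_mem_nhdsWithin] with y hy
        refine Filter.Eventually.of_forall fun t => ?_
        have hy' : y ≠ s := hy
        have hys : 0 < |y - s| := abs_pos.2 (sub_ne_zero.2 hy')
        rw [Real.norm_eq_abs, abs_mul, abs_div]
        have h1 : |p (t - y) - p (t - s)| ≤ L₁ / σ * |y - s| := by
          have h2 := hplip (t - y) (t - s)
          rw [show t - y - (t - s) = -(y - s) by ring, abs_neg] at h2
          exact h2
        have h2 : |p (t - y) - p (t - s)| / |y - s| ≤ L₁ / σ := by
          rw [div_le_iff₀ hys]; exact h1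
        calc |p (t - y) - p (t - s)| / |y - s| * |p t| ≤ L₁ / σ * |p t| :=
              mul_le_mul_of_nonneg_right h2 (abs_nonneg _)
          _ = L₁ / σ * p t := by rw [abs_of_nonneg (hp_nonneg t)]
      · filter_upwards [hradt] with t ht
        have hq : HasDerivAt (fun y => p (t - y)) (deriv p (t - s) * -1) s :=
          HasDerivAt.comp s ht.hasDerivAt ((hasDerivAt_id s).const_sub t)
        have h3 := (hasDerivAt_iff_tendsto_slope.1 hq).mul_const (p t)
        rw [show -deriv p (t - s) * p t = deriv p (t - s) * -1 * p t by ring]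
        refine Filter.Tendsto.congr (fun y => ?_) h3
        simp [slope_def_field]
    refine Filter.Tendsto.congr' ?_ hDCT
    filter_upwards [self_mem_nhdsWithin] with y hy
    have hy' : y ≠ s := hy
    rw [slope_def_field, hV y, hV s, ← integral_sub (hVint y) (hVint s), ← integral_div]
    congr 1
    funext t
    ring
  have hVds : ∀ s : ℝ, HasDerivAt V (deriv V s) s := fun s =>
    (hVd s).differentiableAt.hasDerivAt
  -- Lipschitz bound on deriv V
  have hlip : ∀ s r : ℝ, |deriv V s - deriv V r| ≤ 2 * p 0 * L₁ / σ * |s - r| := by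
    intro s r
    have hs := (hVds s).tendsto_slope_zero
    have hr := (hVds r).tendsto_slope_zero
    have habs := (hs.sub hr).abs
    refine le_of_tendsto habs ?_
    filter_upwards [self_mem_nhdsWithin] with h hh
    have hh' : (h : ℝ) ≠ 0 := hh
    have hhabs : (0:ℝ) < |h| := abs_pos.2 hh'
    have gcont : Continuous fun u : ℝ => p (u - h) - p u :=
      (hp_cont.comp (continuous_id.sub continuous_const)).sub hp_cont
    have e1 : ∀ w : ℝ, V (w + h) - V w = ∫ u, (p (u - h) - p u) * p (u + w) := by
      intro w
      rw [hV (w + h), hV w, ← integral_sub (hVint (w + h)) (hVint w),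
        ← integral_add_right_eq_self
          (fun t => p (t - (w + h)) * p t - p (t - w) * p t) w]
      congr 1
      funext u
      rw [show u + w - (w + h) = u - h by ring, show u + w - w = u by ring]
      ring
    have intA : Integrable fun u => (p (u - h) - p u) * p (u + s) :=
      hImul _ gcont (fun t => hb2 _ _) s
    have intB : Integrable fun u => (p (u - h) - p u) * p (u + r) :=
      hImul _ gcont (fun t => hb2 _ _) r
    have e2 : (V (s + h) - V s) - (V (r + h) - V r)
        = ∫ u, (p (u - h) - p u) * (p (u + s) - p (u + r)) := by
      rw [e1 s, e1 r, ← integral_sub intA intB]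
      congr 1
      funext u
      ring
    rw [smul_eq_mul, smul_eq_mul, ← mul_sub, abs_mul, abs_inv, e2]
    have hbound : |∫ u, (p (u - h) - p u) * (p (u + s) - p (u + r))|
        ≤ L₁ / σ * |s - r| * (2 * |h| * p 0) := by
      have intAB : Integrable fun u => (p (u - h) - p u) * (p (u + s) - p (u + r)) := by
        have h10 := intA.sub intB
        simpa [mul_sub, Pi.sub_def] using h10
      have step1 : |∫ u, (p (u - h) - p u) * (p (u + s) - p (u + r))|
          ≤ ∫ u, |(p (u - h) - p u) * (p (u + s) - p (u + r))| := by
        calc |∫ u, (p (u - h) - p u) * (p (u + s) - p (u + r))|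
            ≤ ∫ u, ‖(p (u - h) - p u) * (p (u + s) - p (u + r))‖ := by
              rw [← Real.norm_eq_abs]
              exact norm_integral_le_integral_norm _
          _ = ∫ u, |(p (u - h) - p u) * (p (u + s) - p (u + r))| := by
              simp only [Real.norm_eq_abs]
      have step2 : (∫ u, |(p (u - h) - p u) * (p (u + s) - p (u + r))|)
          ≤ ∫ u, L₁ / σ * |s - r| * |p (u - h) - p u| := by
        refine integral_mono intAB.abs
          ((((hcomps h).sub hp_int).abs.const_mul _)) fun u => ?_
        simp only
        rw [abs_mul]
        have h4 : |p (u + s) - p (u + r)| ≤ L₁ / σ * |s - r| := by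
          have h5 := hplip (u + s) (u + r)
          rw [show u + s - (u + r) = s - r by ring] at h5
          exact h5
        calc |p (u - h) - p u| * |p (u + s) - p (u + r)|
            ≤ |p (u - h) - p u| * (L₁ / σ * |s - r|) :=
              mul_le_mul_of_nonneg_left h4 (abs_nonneg _)
          _ = L₁ / σ * |s - r| * |p (u - h) - p u| := by ring
      have step3 : (∫ u, L₁ / σ * |s - r| * |p (u - h) - p u|)
          = L₁ / σ * |s - r| * ∫ u, |p (u - h) - p u| := integral_const_mul _ _
      have step4 : (∫ u, |p (u - h) - p u|) ≤ 2 * |h| * p 0 := by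
        have h6 := hshift' (-h)
        simp only [← sub_eq_add_neg, abs_neg] at h6
        exact h6
      calc |∫ u, (p (u - h) - p u) * (p (u + s) - p (u + r))|
          ≤ ∫ u, L₁ / σ * |s - r| * |p (u - h) - p u| := step1.trans step2
        _ = L₁ / σ * |s - r| * ∫ u, |p (u - h) - p u| := step3
        _ ≤ L₁ / σ * |s - r| * (2 * |h| * p 0) := by
            refine mul_le_mul_of_nonneg_left step4 (by positivity)
    calc |h|⁻¹ * |∫ u, (p (u - h) - p u) * (p (u + s) - p (u + r))|
        ≤ |h|⁻¹ * (L₁ / σ * |s - r| * (2 * |h| * p 0)) :=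
          mul_le_mul_of_nonneg_left hbound (inv_nonneg.2 (abs_nonneg _))
      _ = 2 * p 0 * L₁ / σ * |s - r| := by
          field_simp
  -- V is even and deriv V 0 = 0
  have hVeven : ∀ s : ℝ, V (-s) = V s := by
    intro s
    rw [hV (-s), hV s,
      ← integral_add_right_eq_self (fun t => p (t - s) * p t) s]
    congr 1
    funext t
    rw [show t + s - s = t by ring, show t - -s = t + s by ring]
    ring
  have h2 : deriv V 0 = 0 := by
    have h1 : HasDerivAt (fun s : ℝ => V (-s)) (deriv V 0 * -1) 0 := by
      have := HasDerivAt.comp (0:ℝ) (by rw [neg_zero] at *; exact hVds 0)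
        (hasDerivAt_neg (0:ℝ))
      simpa [Function.comp_def] using this
    have h1' : (fun s : ℝ => V (-s)) = V := funext hVeven
    rw [h1'] at h1
    have := h1.unique (hVds 0)
    linarith
  -- quadratic bound
  have hKnn : 0 ≤ 2 * p 0 * L₁ / σ := by positivity
  have hdcont : Continuous (deriv V) := by
    have : LipschitzWith (Real.toNNReal (2 * p 0 * L₁ / σ)) (deriv V) :=
      LipschitzWith.of_dist_le_mul fun a b => by
        rw [Real.dist_eq, Real.dist_eq, Real.coe_toNNReal _ hKnn]
        exact hlip a b
    exact this.continuous
  have h3 : ∀ s : ℝ, V 0 - V s ≤ 2 * p 0 * L₁ / σ * s ^ 2 := by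
    have h3' : ∀ s : ℝ, 0 ≤ s → V 0 - V s ≤ 2 * p 0 * L₁ / σ * s ^ 2 := by
      intro s hs
      have hftc : (∫ t in (0:ℝ)..s, deriv V t) = V s - V 0 :=
        intervalIntegral.integral_eq_sub_of_hasDerivAt (fun x _ => hVds x)
          (hdcont.intervalIntegrable _ _)
      have hm : (∫ t in (0:ℝ)..s, -deriv V t)
          ≤ ∫ t in (0:ℝ)..s, 2 * p 0 * L₁ / σ * t := by
        refine intervalIntegral.integral_mono_on hs
          ((hdcont.neg).intervalIntegrable _ _)
          ((continuous_const.mul continuous_id).intervalIntegrable _ _) fun t ht => ?_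
        have h4 := hlip t 0
        rw [h2, sub_zero, sub_zero] at h4
        have h5 : |t| = t := abs_of_nonneg ht.1
        rw [h5] at h4
        have := neg_abs_le (deriv V t)
        linarith [abs_le.1 h4]
      rw [intervalIntegral.integral_neg, hftc] at hm
      have h6 : (∫ t in (0:ℝ)..s, 2 * p 0 * L₁ / σ * t)
          = 2 * p 0 * L₁ / σ * (s ^ 2 / 2) := by
        rw [intervalIntegral.integral_const_mul, integral_id]
        ring
      rw [h6] at hm
      nlinarith [sq_nonneg s]
    intro s
    rcases le_or_gt 0 s with hs | hs
    · exact h3' s hs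
    · have := h3' (-s) (by linarith)
      rw [hVeven s] at this
      simpa [neg_pow] using this
  refine ⟨hlip, h2, h3, ?_⟩
  -- the statistical consequence
  intro f hf hfB
  obtain ⟨C, hC⟩ := hfB
  set ρ : Measure 𝒳 := μ.map X with hρ
  haveI : IsProbabilityMeasure ρ := Measure.isProbabilityMeasure_map hX.aemeasurable
  -- apply the density hypothesis
  have hbd : ∀ g : 𝒳 → ℝ, Measurable g →
      Measurable (Function.uncurry fun x y => p (y - g x)) := by
    intro g hg
    exact hp_cont.measurable.comp (measurable_snd.sub (hg.comp measurable_fst))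
  have hbd2 : ∀ g : 𝒳 → ℝ, ∃ C', ∀ x y, |p (y - g x)| ≤ C' :=
    fun g => ⟨2 * p 0, fun x y => hb1 _⟩
  have A1 := hdens (fun x y => p (y - fstar x)) (hbd fstar hfstar) (hbd2 fstar)
  have A2 := hdens (fun x y => p (y - f x)) (hbd f hf) (hbd2 f)
  have inner1 : ∀ a : ℝ, (∫ y, p (y - a) * (c * p (y - a))) = c * V 0 := by
    intro a
    have e : V 0 = ∫ t, p t * p t := by
      rw [hV 0]
      congr 1
      funext t
      rw [sub_zero]
    rw [e, show (fun y => p (y - a) * (c * p (y - a)))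
        = fun y => c * (p (y - a) * p (y - a)) from funext fun y => by ring,
      integral_const_mul, integral_sub_right_eq_self (fun t => p t * p t) a]
  have inner2 : ∀ a b : ℝ, (∫ y, p (y - b) * (c * p (y - a))) = c * V (b - a) := by
    intro a b
    rw [hV (b - a)]
    rw [show (fun y => p (y - b) * (c * p (y - a)))
        = fun y => c * (p (y - b) * p (y - a)) from funext fun y => by ring,
      integral_const_mul]
    congr 1
    rw [← integral_add_right_eq_self (fun y => p (y - b) * p (y - a)) a]
    congr 1
    funext t
    rw [show t + a - b = t - (b - a) by ring, show t + a - a = t by ring]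
  have B1 : (∫ ω, p (Y ω - fstar (X ω)) ∂μ) = c * V 0 := by
    rw [A1]
    rw [show (fun x => ∫ y, p (y - fstar x) * (c * p (y - fstar x))) =
        fun _x : 𝒳 => c * V 0 from funext fun x => inner1 (fstar x)]
    simp
  have B2 : (∫ ω, p (Y ω - f (X ω)) ∂μ)
      = ∫ x, c * V (f x - fstar x) ∂ρ := by
    rw [A2]
    congr 1
    funext x
    exact inner2 (fstar x) (f x)
  rw [B1, B2]
  -- pass to an integral inequality over ρ
  have hVcont : Continuous V := by
    refine continuous_iff_continuousAt.2 fun x => (hVds x).differentiableAt.continuousAt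
  have hVbdd : ∀ t : ℝ, |V t| ≤ p 0 * ∫ u, p u := by
    intro t
    rw [hV t]
    have step1 : |∫ u, p (u - t) * p u| ≤ ∫ u, |p (u - t) * p u| := by
      calc |∫ u, p (u - t) * p u| ≤ ∫ u, ‖p (u - t) * p u‖ := by
            rw [← Real.norm_eq_abs]
            exact norm_integral_le_integral_norm _
        _ = ∫ u, |p (u - t) * p u| := by simp only [Real.norm_eq_abs]
    refine step1.trans ?_
    rw [show p 0 * (∫ u, p u) = ∫ u, p 0 * p u from (integral_const_mul _ _).symm]
    refine integral_mono (hVint t).abs (hp_int.const_mul _) fun u => ?_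
    simp only
    rw [abs_mul, abs_of_nonneg (hp_nonneg _), abs_of_nonneg (hp_nonneg _)]
    exact mul_le_mul_of_nonneg_right (hp0 _) (hp_nonneg u)
  have hΔmeas : Measurable fun x => f x - fstar x := hf.sub hfstar
  have intV : Integrable (fun x => c * V (f x - fstar x)) ρ := by
    refine Integrable.mono' (integrable_const (|c| * (p 0 * ∫ u, p u)))
      ((hVcont.measurable.comp hΔmeas).const_mul c).aestronglyMeasurable ?_
    refine Filter.Eventually.of_forall fun x => ?_
    rw [Real.norm_eq_abs, abs_mul]
    exact mul_le_mul_of_nonneg_left (hVbdd _) (abs_nonneg _)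
  have intΔ2 : Integrable (fun x => (f x - fstar x) ^ 2) ρ := by
    refine Integrable.mono' (integrable_const ((C + Mstar) ^ 2))
      ((hΔmeas.pow_const 2)).aestronglyMeasurable ?_
    refine Filter.Eventually.of_forall fun x => ?_
    rw [Real.norm_eq_abs, abs_of_nonneg (sq_nonneg _)]
    have h7 : |f x - fstar x| ≤ C + Mstar := by
      calc |f x - fstar x| ≤ |f x| + |fstar x| := abs_sub _ _
        _ ≤ C + Mstar := add_le_add (hC x) (hfstarB x)
    have h8 : 0 ≤ |f x - fstar x| := abs_nonneg _
    calc (f x - fstar x) ^ 2 = |f x - fstar x| ^ 2 := (sq_abs _).symm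
      _ ≤ (C + Mstar) ^ 2 := by nlinarith
  have hrhs : (∫ ω, (f (X ω) - fstar (X ω)) ^ 2 ∂μ)
      = ∫ x, (f x - fstar x) ^ 2 ∂ρ := by
    rw [hρ, integral_map hX.aemeasurable (hΔmeas.pow_const 2).aestronglyMeasurable]
  rw [hrhs]
  have hconst : c * V 0 = ∫ _x, c * V 0 ∂ρ := by simp
  rw [hconst, ← integral_sub (integrable_const _) intV]
  have : 2 * c * p 0 * L₁ / σ * ∫ x, (f x - fstar x) ^ 2 ∂ρ
      = ∫ x, 2 * c * p 0 * L₁ / σ * (f x - fstar x) ^ 2 ∂ρ :=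
    (integral_const_mul _ _).symm
  rw [this]
  refine integral_mono ((integrable_const _).sub intV) (intΔ2.const_mul _) fun x => ?_
  simp only
  have h9 := h3 (f x - fstar x)
  calc c * V 0 - c * V (f x - fstar x) = c * (V 0 - V (f x - fstar x)) := by ring
    _ ≤ c * (2 * p 0 * L₁ / σ * (f x - fstar x) ^ 2) :=
        mul_le_mul_of_nonneg_left h9 hc.le
    _ = 2 * c * p 0 * L₁ / σ * (f x - fstar x) ^ 2 := by ring
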